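/- arXiv:2003.01647 — 5 statements merged into one kernel-verified Lean document; each statement's English description precedes it below -/
import Mathlib

section
/- If A is an n × n × n alternating sign hypermatrix and L(A) is its corresponding ASHL, defined by L(A)_{ij} = ∑_{k=1}^n k·a_{ijk}, then every entry of L(A) lies in the interval [1, n]. -/
open Finset

/-- The nonzero entries of the sequence `f`, in order. -/
def nonzeroList {n : ℕ} (f : Fin n → ℤ) : List ℤ :=
  ((List.finRange n).map f).filter (· != 0)

/-- The nonzero entries of `f` alternate in sign, beginning and ending with `+1`. -/
def AltLine {n : ℕ} (f : Fin n → ℤ) : Prop :=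
  nonzeroList f ≠ [] ∧
  (∀ i : ℕ, ∀ h : i < (nonzeroList f).length,
      (nonzeroList f).get ⟨i, h⟩ = (-1 : ℤ) ^ i) ∧
  (nonzeroList f).getLast? = some 1

/-- Alternating sign matrix. -/
def IsASM {n : ℕ} (M : Fin n → Fin n → ℤ) : Prop :=
  (∀ i, AltLine (fun j => M i j)) ∧ (∀ j, AltLine (fun i => M i j))

/-- Alternating sign hypermatrix. -/
def IsASHM {n : ℕ} (A : Fin n → Fin n → Fin n → ℤ) : Prop :=
  (∀ j k, AltLine (fun i => A i j k)) ∧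
  (∀ i k, AltLine (fun j => A i j k)) ∧
  (∀ i j, AltLine (fun k => A i j k))

/-- The ASHL of an ASHM: `L(A)_{ij} = ∑ k·a_{ijk}` (planes indexed `1,…,n`). -/
def ashl {n : ℕ} (A : Fin n → Fin n → Fin n → ℤ) (i j : Fin n) : ℤ :=
  ∑ k : Fin n, ((k : ℕ) + 1 : ℤ) * A i j k

def tsign {n : ℕ} (a b x : Fin n) : ℤ :=
  if x = a then 1 else if x = b then -1 else 0

/-- The T-block `T_{i₁,j₁,k₁ : i₂,j₂,k₂}`. -/
def Tblock {n : ℕ} (i₁ i₂ j₁ j₂ k₁ k₂ : Fin n) (i j k : Fin n) : ℤ :=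
  tsign i₁ i₂ i * tsign j₁ j₂ j * tsign k₁ k₂ k

lemma sum_filter_ne_zero (l : List ℤ) : (l.filter (· != 0)).sum = l.sum := by
  induction l with
  | nil => simp
  | cons a l ih =>
    by_cases h : a = 0 <;> simp [List.filter_cons, h, ih]

lemma nonzeroList_eq_map {n : ℕ} (f : Fin n → ℤ) :
    nonzeroList f = (List.ofFn f).filter (· != 0) := by
  rw [nonzeroList, List.ofFn_eq_map]

lemma nonzeroList_length_odd {n : ℕ} (f : Fin n → ℤ) (hf : AltLine f) :
    Odd (nonzeroList f).length := by
  obtain ⟨hne, halt, hlast⟩ := hf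
  set N := nonzeroList f with hN
  have hL : 0 < N.length := List.length_pos_iff.2 hne
  have h1 : N.getLast hne = 1 := by
    rw [List.getLast?_eq_getLast_of_ne_nil hne] at hlast
    exact Option.some.inj hlast
  have h2 : N.getLast hne = (-1 : ℤ) ^ (N.length - 1) := by
    rw [List.getLast_eq_getElem]
    have := halt (N.length - 1) (by omega)
    simpa [List.get_eq_getElem] using this
  have h3 : Even (N.length - 1) := by
    rw [h2] at h1
    exact neg_one_pow_eq_one_iff_even (by norm_num) |>.1 h1
  obtain ⟨c, hc⟩ := h3
  exact ⟨c, by omega⟩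

lemma nonzeroList_take_sum {n : ℕ} (f : Fin n → ℤ) (hf : AltLine f) (t : ℕ) :
    ((nonzeroList f).take t).sum
      = if Even (min t (nonzeroList f).length) then 0 else 1 := by
  obtain ⟨hne, halt, hlast⟩ := hf
  set N := nonzeroList f with hN
  have hrepr : N = (List.range N.length).map (fun i => (-1 : ℤ) ^ i) := by
    apply List.ext_get (by simp)
    intro i h1 h2
    have := halt i h1
    simpa [List.get_eq_getElem] using this
  have key : (N.take t).sum
      = ∑ i ∈ Finset.range (min t N.length), (-1 : ℤ) ^ i := by
    conv_lhs => rw [hrepr, ← List.map_take, List.take_range]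
    rfl
  rw [key, neg_one_geom_sum]

lemma prefix_sum_mem {n : ℕ} (f : Fin n → ℤ) (hf : AltLine f) (m : ℕ) :
    0 ≤ ((List.ofFn f).take m).sum ∧ ((List.ofFn f).take m).sum ≤ 1 := by
  have hpre : ((List.ofFn f).take m).filter (· != 0) <+: nonzeroList f := by
    rw [nonzeroList_eq_map]
    exact List.IsPrefix.filter _ (List.take_prefix m _)
  obtain ⟨t, ht⟩ : ∃ t, ((List.ofFn f).take m).filter (· != 0)
      = (nonzeroList f).take t :=
    ⟨_, List.prefix_iff_eq_take.1 hpre⟩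
  have hsum : ((List.ofFn f).take m).sum = ((nonzeroList f).take t).sum := by
    rw [← sum_filter_ne_zero, ht]
  rw [hsum, nonzeroList_take_sum f hf t]
  split <;> norm_num

lemma ofFn_sum_eq_one {n : ℕ} (f : Fin n → ℤ) (hf : AltLine f) :
    (List.ofFn f).sum = 1 := by
  have h1 : (List.ofFn f).sum = (nonzeroList f).sum := by
    rw [← sum_filter_ne_zero, nonzeroList_eq_map]
  have h2 := nonzeroList_take_sum f hf (nonzeroList f).length
  rw [List.take_length] at h2
  have hodd := nonzeroList_length_odd f hf
  rw [h1, h2, min_self, if_neg (Nat.not_even_iff_odd.2 hodd)]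

theorem ashl_entries_in_range {n : ℕ} (A : Fin n → Fin n → Fin n → ℤ)
    (hA : IsASHM A) :
    ∀ i j, 1 ≤ ashl A i j ∧ ashl A i j ≤ (n : ℤ) := by
  intro i j
  set f : Fin n → ℤ := fun k => A i j k with hfdef
  have halt : AltLine f := hA.2.2 i j
  have hP := prefix_sum_mem f halt
  have htot : (List.ofFn f).sum = 1 := ofFn_sum_eq_one f halt
  have key : ashl A i j = ∑ m : Fin n, (1 - ((List.ofFn f).take m.val).sum) := by
    have h2 : ashl A i j = ∑ k : Fin n, ∑ m ∈ Finset.Iic k, f k := by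
      rw [ashl]
      refine Finset.sum_congr rfl fun k _ => ?_
      rw [Finset.sum_const, Fin.card_Iic]
      push_cast
      ring
    have h3 : (∑ k : Fin n, ∑ m ∈ Finset.Iic k, f k)
        = ∑ m : Fin n, ∑ k ∈ Finset.Ici m, f k :=
      Finset.sum_comm' (by intro k m; simp)
    have h4 : ∀ m : Fin n, ∑ k ∈ Finset.Ici m, f k
        = 1 - ((List.ofFn f).take m.val).sum := by
      intro m
      have hsplit : ∑ k ∈ Finset.Iio m, f k + ∑ k ∈ Finset.Ici m, f k
          = ∑ k : Fin n, f k := by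
        rw [← Finset.sum_filter_add_sum_filter_not Finset.univ (fun k => k < m) f]
        congr 1
        · apply Finset.sum_congr _ fun _ _ => rfl
          ext k; simp
        · apply Finset.sum_congr _ fun _ _ => rfl
          ext k; simp [not_lt]
      have hIio : ∑ k ∈ Finset.Iio m, f k = ((List.ofFn f).take m.val).sum := by
        rw [List.sum_take_ofFn]
        apply Finset.sum_congr _ fun _ _ => rfl
        ext k
        simp only [Finset.mem_Iio, Finset.mem_filter, Finset.mem_univ, true_and,
          Fin.lt_def]
      have huniv : (∑ k : Fin n, f k) = 1 := by rw [← List.sum_ofFn, htot]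
      linarith [hsplit, hIio, huniv]
    rw [h2, h3]
    exact Finset.sum_congr rfl fun m _ => h4 m
  rw [key]
  constructor
  · have hn : 0 < n := i.pos
    have hzero : (1 : ℤ) - ((List.ofFn f).take (⟨0, hn⟩ : Fin n).val).sum = 1 := by
      show (1 : ℤ) - ((List.ofFn f).take 0).sum = 1
      rw [List.take_zero, List.sum_nil, sub_zero]
    calc (1 : ℤ) = 1 - ((List.ofFn f).take (⟨0, hn⟩ : Fin n).val).sum := hzero.symm
      _ ≤ ∑ m : Fin n, (1 - ((List.ofFn f).take m.val).sum) :=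
        Finset.single_le_sum (f := fun m : Fin n => 1 - ((List.ofFn f).take m.val).sum)
          (fun m _ => by
            show (0 : ℤ) ≤ 1 - ((List.ofFn f).take m.val).sum
            linarith [(hP m.val).2])
          (Finset.mem_univ (⟨0, hn⟩ : Fin n))
  · calc (∑ m : Fin n, (1 - ((List.ofFn f).take m.val).sum))
        ≤ ∑ _m : Fin n, (1 : ℤ) :=
          Finset.sum_le_sum (fun m _ => by linarith [(hP m.val).1])
      _ = (n : ℤ) := by simp
end

section
/- For any n × n × n alternating sign hypermatrix A, the first row of L(A) is a permutation of {1,2,…,n}; the same holds for the last row, the first column, and the last column of L(A). -/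
open Finset

namespace AshlAux

lemma mem_nonzeroList {n : ℕ} {f : Fin n → ℤ} {x : Fin n} (hx : f x ≠ 0) :
    f x ∈ nonzeroList f := by
  unfold nonzeroList
  rw [List.mem_filter]
  exact ⟨List.mem_map_of_mem (f := f) (List.mem_finRange x), by simpa using hx⟩

lemma of_mem_nonzeroList {n : ℕ} {f : Fin n → ℤ} {a : ℤ} (ha : a ∈ nonzeroList f) :
    ∃ x, f x = a ∧ a ≠ 0 := by
  unfold nonzeroList at ha
  rw [List.mem_filter, List.mem_map] at ha
  obtain ⟨⟨x, _, hx⟩, h0⟩ := ha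
  exact ⟨x, hx, by simpa using h0⟩

lemma head_ne_neg_one {n : ℕ} {f : Fin n → ℤ} (hf : AltLine f) (hn : 0 < n) :
    f ⟨0, hn⟩ ≠ -1 := by
  intro h
  obtain ⟨m, rfl⟩ := Nat.exists_eq_succ_of_ne_zero hn.ne'
  have h0 : (⟨0, hn⟩ : Fin (m + 1)) = 0 := rfl
  have hne : nonzeroList f = f 0 :: (((List.finRange m).map (Fin.succ)).map f).filter (· != 0) := by
    unfold nonzeroList
    rw [List.finRange_succ, List.map_cons, List.filter_cons]
    rw [h0] at h
    simp [h]
  have hlen : 0 < (nonzeroList f).length := by rw [hne]; simp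
  rw [h0] at h
  have hval := hf.2.1
  rw [hne] at hval
  have hv := hval 0 (by simp)
  simp at hv
  rw [hv] at h
  norm_num at h

lemma last_ne_neg_one {n : ℕ} {f : Fin n → ℤ} (hf : AltLine f) (hn : 0 < n) :
    f ⟨n - 1, Nat.sub_lt hn one_pos⟩ ≠ -1 := by
  intro h
  obtain ⟨m, rfl⟩ := Nat.exists_eq_succ_of_ne_zero hn.ne'
  have h0 : (⟨m + 1 - 1, Nat.sub_lt hn one_pos⟩ : Fin (m + 1)) = Fin.last m := rfl
  rw [h0] at h
  have hne : nonzeroList f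
      = (((List.finRange m).map (Fin.castSucc)).map f).filter (· != 0) ++ [f (Fin.last m)] := by
    unfold nonzeroList
    rw [List.finRange_succ_last, List.map_append, List.filter_append]
    simp [h]
  have := hf.2.2
  rw [hne, List.getLast?_concat, h] at this
  norm_num at this

lemma values {n : ℕ} {f : Fin n → ℤ} (hf : AltLine f) (x : Fin n) :
    f x = 0 ∨ f x = 1 ∨ f x = -1 := by
  by_cases h0 : f x = 0
  · exact Or.inl h0
  · right
    have hmem := mem_nonzeroList h0
    rw [List.mem_iff_get] at hmem
    obtain ⟨⟨i, hi⟩, hget⟩ := hmem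
    have := hf.2.1 i hi
    rw [hget] at this
    rcases Nat.even_or_odd i with he | ho
    · left; rw [this, he.neg_one_pow]
    · right; rw [this, ho.neg_one_pow]

/-- If an alternating line has no `-1` entries, it has a unique nonzero entry, which is `1`. -/
lemma unique_one {n : ℕ} {f : Fin n → ℤ} (hf : AltLine f) (hno : ∀ x, f x ≠ -1) :
    ∃ x, f x = 1 ∧ ∀ y, f y ≠ 0 → y = x := by
  have hlen1 : (nonzeroList f).length = 1 := by
    rcases Nat.lt_or_ge (nonzeroList f).length 2 with h | h
    · interval_cases h' : (nonzeroList f).length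
      · exact absurd (List.length_eq_zero_iff.mp h') hf.1
      · rfl
    · exfalso
      have hget := hf.2.1 1 h
      have hmem : (-1 : ℤ) ∈ nonzeroList f := by
        rw [← show ((-1:ℤ))^1 = -1 by ring, ← hget]
        exact List.get_mem _ ⟨1, h⟩
      obtain ⟨x, hx, _⟩ := of_mem_nonzeroList hmem
      exact hno x hx
  have hfm : nonzeroList f = ((List.finRange n).filter (fun x => f x != 0)).map f := by
    unfold nonzeroList
    rw [List.filter_map]
    rfl
  have hl' : ((List.finRange n).filter (fun x => f x != 0)).length = 1 := by
    rw [hfm, List.length_map] at hlen1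
    exact hlen1
  obtain ⟨x0, hx0⟩ := List.length_eq_one_iff.mp hl'
  have hx0f : nonzeroList f = [f x0] := by rw [hfm, hx0]; rfl
  have hval := hf.2.1
  rw [hx0f] at hval
  have hget := hval 0 (by simp)
  simp at hget
  refine ⟨x0, hget, fun y hy => ?_⟩
  have : y ∈ (List.finRange n).filter (fun x => f x != 0) := by
    rw [List.mem_filter]
    exact ⟨List.mem_finRange y, by simpa using hy⟩
  rw [hx0] at this
  simpa using this

lemma master {n : ℕ} (B : Fin n → Fin n → ℤ)
    (h1 : ∀ k, AltLine (fun j => B j k))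
    (h2 : ∀ j, AltLine (fun k => B j k))
    (h3 : ∀ j k, B j k ≠ -1) :
    ∀ m : ℤ, 1 ≤ m → m ≤ (n : ℤ) →
      ∃! j, (∑ k : Fin n, ((k : ℕ) + 1 : ℤ) * B j k) = m := by
  -- for each j, unique k with B j k = 1, rest 0
  have hd : ∀ j, ∃ k, B j k = 1 ∧ ∀ k', B j k' ≠ 0 → k' = k := fun j =>
    unique_one (h2 j) (fun k => h3 j k)
  choose d hd1 hd2 using hd
  -- for each k, unique j with B j k ≠ 0
  have hc : ∀ k, ∃ j, B j k = 1 ∧ ∀ j', B j' k ≠ 0 → j' = j := fun k =>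
    unique_one (h1 k) (fun j => h3 j k)
  choose c hc1 hc2 using hc
  have hcd : ∀ j, c (d j) = j := fun j =>
    (hc2 (d j) j (by rw [hd1 j]; norm_num)).symm
  have hdinj : Function.Injective d := fun j j' h => by
    rw [← hcd j, ← hcd j', h]
  have hsum : ∀ j, (∑ k : Fin n, ((k : ℕ) + 1 : ℤ) * B j k) = ((d j : ℕ) : ℤ) + 1 := by
    intro j
    rw [Finset.sum_eq_single (d j)]
    · rw [hd1 j]; ring
    · intro k _ hk
      have : B j k = 0 := by
        by_contra h
        exact hk (hd2 j k h)
      rw [this]; ring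
    · intro h; exact absurd (Finset.mem_univ _) h
  intro m hm1 hm2
  have hdsurj : Function.Surjective d := Finite.surjective_of_injective hdinj
  have hmn : (m - 1).toNat < n := by omega
  obtain ⟨j, hj⟩ := hdsurj ⟨(m - 1).toNat, hmn⟩
  have hjv : ((d j : ℕ) : ℤ) = m - 1 := by
    rw [hj]
    exact Int.toNat_of_nonneg (by omega)
  refine ⟨j, ?_, ?_⟩
  · show (∑ k : Fin n, ((k : ℕ) + 1 : ℤ) * B j k) = m
    rw [hsum j, hjv]
    ring
  · intro j' hj'
    apply hdinj
    rw [hsum j'] at hj'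
    apply Fin.ext
    have : ((d j' : ℕ) : ℤ) = ((d j : ℕ) : ℤ) := by omega
    exact_mod_cast this

end AshlAux

theorem ashl_border_permutation {n : ℕ} (hn : 0 < n)
    (A : Fin n → Fin n → Fin n → ℤ) (hA : IsASHM A) :
    ∀ m : ℤ, 1 ≤ m → m ≤ (n : ℤ) →
      (∃! j, ashl A ⟨0, hn⟩ j = m) ∧
      (∃! j, ashl A ⟨n - 1, Nat.sub_lt hn one_pos⟩ j = m) ∧
      (∃! i, ashl A i ⟨0, hn⟩ = m) ∧
      (∃! i, ashl A i ⟨n - 1, Nat.sub_lt hn one_pos⟩ = m) := by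
  obtain ⟨hA1, hA2, hA3⟩ := hA
  intro m hm1 hm2
  refine ⟨?_, ?_, ?_, ?_⟩
  · exact AshlAux.master (fun j k => A ⟨0, hn⟩ j k)
      (fun k => hA2 _ k) (fun j => hA3 _ j)
      (fun j k => AshlAux.head_ne_neg_one (hA1 j k) hn) m hm1 hm2
  · exact AshlAux.master (fun j k => A ⟨n - 1, Nat.sub_lt hn one_pos⟩ j k)
      (fun k => hA2 _ k) (fun j => hA3 _ j)
      (fun j k => AshlAux.last_ne_neg_one (hA1 j k) hn) m hm1 hm2
  · exact AshlAux.master (fun i k => A i ⟨0, hn⟩ k)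
      (fun k => hA1 _ k) (fun i => hA3 i _)
      (fun i k => AshlAux.head_ne_neg_one (hA2 i k) hn) m hm1 hm2
  · exact AshlAux.master (fun i k => A i ⟨n - 1, Nat.sub_lt hn one_pos⟩ k)
      (fun k => hA1 _ k) (fun i => hA3 i _)
      (fun i k => AshlAux.last_ne_neg_one (hA2 i k) hn) m hm1 hm2
end

section
/- If A and B are n × n × n alternating sign hypermatrices, then the difference A − B can be written as a finite sum of T-blocks (each T-block taken with sign +1 or −1). -/
open Finset

/-! ### Auxiliary lemmas -/

lemma sum_range_neg_one_pow (m : ℕ) :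
    ∑ i ∈ Finset.range m, (-1 : ℤ)^i = if Even m then 0 else 1 := by
  induction m with
  | zero => simp
  | succ m ih =>
    rcases Nat.even_or_odd m with h | h
    · simp [Finset.sum_range_succ, ih, h, Nat.even_add_one, h.neg_one_pow]
    · simp [Finset.sum_range_succ, ih, h.neg_one_pow, Nat.even_add_one,
        Nat.not_even_iff_odd.mpr h]

lemma altLine_sum {n : ℕ} {f : Fin n → ℤ} (h : AltLine f) : ∑ x, f x = 1 := by
  obtain ⟨hne, hget, hlast⟩ := h
  set l := nonzeroList f with hl
  have hLpos : 0 < l.length := List.length_pos_iff.mpr hne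
  have hlast' : l.getLast hne = 1 := by
    have := List.getLast?_eq_getLast hne
    rw [hlast] at this; exact (Option.some.inj this).symm
  have hgl : l.getLast hne = l.get ⟨l.length - 1, by omega⟩ := List.getLast_eq_getElem hne
  have hodd : Odd l.length := by
    have h1 : (-1:ℤ) ^ (l.length - 1) = 1 := by
      rw [← hget (l.length - 1) (by omega), ← hgl, hlast']
    have hev : Even (l.length - 1) := by
      rcases Nat.even_or_odd (l.length - 1) with h | h
      · exact h
      · exfalso; rw [h.neg_one_pow] at h1; norm_num at h1
    rcases hev with ⟨c, hc⟩
    exact ⟨c, by omega⟩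
  have hsuml : l.sum = 1 := by
    have h2 : l = List.ofFn l.get := (List.ofFn_get l).symm
    rw [h2, List.sum_ofFn]
    have h3 : ∀ i : Fin l.length, l.get i = (-1:ℤ)^(i:ℕ) := fun i => hget i i.2
    simp_rw [h3]
    rw [Fin.sum_univ_eq_sum_range, sum_range_neg_one_pow,
      if_neg (Nat.not_even_iff_odd.mpr hodd)]
  have h4 : ∑ x, f x = ((List.finRange n).map f).sum := by
    rw [← List.ofFn_eq_map, List.sum_ofFn]
  set L := (List.finRange n).map f with hL
  have hperm := List.filter_append_perm (fun x => x != 0) L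
  have h5 : L.sum = l.sum + (L.filter (fun x => !(x != 0))).sum := by
    rw [← hperm.sum_eq, List.sum_append]; rfl
  have h0 : (L.filter (fun x => !(x != 0))).sum = 0 := by
    apply List.sum_eq_zero
    intro x hx
    have := (List.mem_filter.mp hx).2
    simpa using this
  rw [h4, h5, h0, hsuml, add_zero]

/-- The 1-D telescoping lemma. -/
lemma tele {n : ℕ} (v : Fin n → ℤ) (hv : ∑ x, v x = 0) (p : Fin n) :
    v p = ∑ i ∈ Finset.range (n-1),
      (∑ x : Fin n, if (x:ℕ) ≤ i then v x else 0) *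
        ((if (p:ℕ) = i then 1 else 0) - (if (p:ℕ) = i+1 then 1 else 0)) := by
  set s : ℕ → ℤ := fun i => ∑ x : Fin n, if (x:ℕ) ≤ i then v x else 0 with hs
  have hs_top : ∀ i, n - 1 ≤ i → s i = 0 := by
    intro i hi
    rw [hs]
    calc (∑ x : Fin n, if (x:ℕ) ≤ i then v x else 0) = ∑ x : Fin n, v x := by
          apply Finset.sum_congr rfl; intro x _
          rw [if_pos (by omega : (x:ℕ) ≤ i)]
      _ = 0 := hv
  have split : ∑ i ∈ Finset.range (n-1),
      s i * ((if (p:ℕ) = i then 1 else 0) - (if (p:ℕ) = i+1 then 1 else 0))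
      = (∑ i ∈ Finset.range (n-1), if (p:ℕ) = i then s i else 0)
        - (∑ i ∈ Finset.range (n-1), if (p:ℕ) = i+1 then s i else 0) := by
    rw [← Finset.sum_sub_distrib]
    apply Finset.sum_congr rfl
    intro i _
    split_ifs <;> ring
  rw [split]
  have first : (∑ i ∈ Finset.range (n-1), if (p:ℕ) = i then s i else 0) = s p := by
    rw [Finset.sum_ite_eq]
    by_cases h : (p:ℕ) ∈ Finset.range (n-1)
    · rw [if_pos h]
    · rw [if_neg h, hs_top p (by simpa using h)]
  rw [first]
  rcases Nat.eq_zero_or_pos (p:ℕ) with hp | hp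
  · have second : (∑ i ∈ Finset.range (n-1), if (p:ℕ) = i+1 then s i else 0) = 0 := by
      apply Finset.sum_eq_zero; intro i _; rw [if_neg (by omega)]
    rw [second, sub_zero, hs]
    calc v p = ∑ x : Fin n, if x = p then v x else 0 := by
          rw [Finset.sum_ite_eq' Finset.univ p v, if_pos (Finset.mem_univ p)]
      _ = ∑ x : Fin n, if (x:ℕ) ≤ (p:ℕ) then v x else 0 := by
          apply Finset.sum_congr rfl; intro x _
          by_cases hxp : x = p
          · rw [if_pos hxp, if_pos (by omega : (x:ℕ) ≤ (p:ℕ))]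
          · have : (x:ℕ) ≠ (p:ℕ) := fun h => hxp (Fin.ext h)
            rw [if_neg hxp, if_neg (by omega)]
  · have second : (∑ i ∈ Finset.range (n-1), if (p:ℕ) = i+1 then s i else 0)
        = s ((p:ℕ) - 1) := by
      have hmem : (p:ℕ) - 1 ∈ Finset.range (n-1) := by
        have := p.2; simp only [Finset.mem_range]; omega
      calc (∑ i ∈ Finset.range (n-1), if (p:ℕ) = i+1 then s i else 0)
          = ∑ i ∈ Finset.range (n-1), if (p:ℕ)-1 = i then s i else 0 := by
            apply Finset.sum_congr rfl; intro i _
            by_cases h : (p:ℕ) = i+1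
            · rw [if_pos h, if_pos (by omega)]
            · rw [if_neg h, if_neg (by omega)]
        _ = s ((p:ℕ)-1) := by rw [Finset.sum_ite_eq, if_pos hmem]
    rw [second, hs]
    rw [← Finset.sum_sub_distrib]
    calc v p = ∑ x : Fin n, if x = p then v x else 0 := by
          rw [Finset.sum_ite_eq' Finset.univ p v, if_pos (Finset.mem_univ p)]
      _ = _ := by
          apply Finset.sum_congr rfl; intro x _
          by_cases hxp : x = p
          · subst hxp
            rw [if_pos rfl, if_pos (le_refl _), if_neg (by omega)]; ring
          · have hne : (x:ℕ) ≠ (p:ℕ) := fun h => hxp (Fin.ext h)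
            rw [if_neg hxp]
            split_ifs with h1 h2 h3
            · ring
            · exact absurd (show (x:ℕ) = (p:ℕ) by omega) hne
            · exact absurd (show (x:ℕ) ≤ (p:ℕ) by omega) h1
            · ring

/-! ### The `Good` predicate -/

def Good {n : ℕ} (D : Fin n → Fin n → Fin n → ℤ) : Prop :=
  ∃ (m : ℕ) (ε : Fin m → ℤ) (i₁ i₂ j₁ j₂ k₁ k₂ : Fin m → Fin n),
    (∀ t, (ε t = 1 ∨ ε t = -1) ∧ i₁ t < i₂ t ∧ j₁ t < j₂ t ∧ k₁ t < k₂ t) ∧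
    ∀ i j k, D i j k = ∑ t, ε t * Tblock (i₁ t) (i₂ t) (j₁ t) (j₂ t) (k₁ t) (k₂ t) i j k

lemma Good_congr {n : ℕ} {D E : Fin n → Fin n → Fin n → ℤ}
    (h : ∀ i j k, D i j k = E i j k) (hE : Good E) : Good D := by
  obtain ⟨m, ε, i₁, i₂, j₁, j₂, k₁, k₂, hcond, heq⟩ := hE
  exact ⟨m, ε, i₁, i₂, j₁, j₂, k₁, k₂, hcond, fun i j k => (h i j k).trans (heq i j k)⟩

lemma Good_zero {n : ℕ} : Good (fun _ _ _ => (0:ℤ) : Fin n → Fin n → Fin n → ℤ) :=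
  ⟨0, Fin.elim0, Fin.elim0, Fin.elim0, Fin.elim0, Fin.elim0, Fin.elim0, Fin.elim0,
    fun t => t.elim0, fun i j k => by simp⟩

lemma Good_add {n : ℕ} {D E : Fin n → Fin n → Fin n → ℤ}
    (hD : Good D) (hE : Good E) : Good (fun i j k => D i j k + E i j k) := by
  obtain ⟨m, ε, i₁, i₂, j₁, j₂, k₁, k₂, hc, he⟩ := hD
  obtain ⟨m', ε', i₁', i₂', j₁', j₂', k₁', k₂', hc', he'⟩ := hE
  refine ⟨m + m', Fin.addCases ε ε', Fin.addCases i₁ i₁', Fin.addCases i₂ i₂',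
    Fin.addCases j₁ j₁', Fin.addCases j₂ j₂', Fin.addCases k₁ k₁', Fin.addCases k₂ k₂',
    ?_, ?_⟩
  · intro t
    refine Fin.addCases ?_ ?_ t <;> intro u <;>
      simp only [Fin.addCases_left, Fin.addCases_right]
    · exact hc u
    · exact hc' u
  · intro i j k
    show D i j k + E i j k = _
    rw [he, he', Fin.sum_univ_add]
    simp only [Fin.addCases_left, Fin.addCases_right]

lemma Good_neg {n : ℕ} {D : Fin n → Fin n → Fin n → ℤ}
    (hD : Good D) : Good (fun i j k => -D i j k) := by
  obtain ⟨m, ε, i₁, i₂, j₁, j₂, k₁, k₂, hc, he⟩ := hD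
  refine ⟨m, fun t => -ε t, i₁, i₂, j₁, j₂, k₁, k₂, ?_, ?_⟩
  · intro t
    obtain ⟨h1, h2⟩ := hc t
    refine ⟨?_, h2⟩
    rcases h1 with h | h <;> simp [h]
  · intro i j k
    show -D i j k = _
    rw [he, ← Finset.sum_neg_distrib]
    exact Finset.sum_congr rfl fun t _ => by ring

lemma Good_nsmul {n : ℕ} {D : Fin n → Fin n → Fin n → ℤ} (hD : Good D) (c : ℕ) :
    Good (fun i j k => (c:ℤ) * D i j k) := by
  induction c with
  | zero => exact Good_congr (by simp) Good_zero
  | succ c ih =>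
    refine Good_congr (E := fun i j k => (c:ℤ) * D i j k + D i j k) ?_ (Good_add ih hD)
    intro i j k; push_cast; ring

lemma Good_smul {n : ℕ} {D : Fin n → Fin n → Fin n → ℤ} (hD : Good D) (c : ℤ) :
    Good (fun i j k => c * D i j k) := by
  rcases Int.natAbs_eq c with h | h
  · exact Good_congr (fun i j k => by conv_lhs => rw [h]) (Good_nsmul hD c.natAbs)
  · refine Good_congr (E := fun i j k => -((c.natAbs : ℤ) * D i j k)) ?_
      (Good_neg (Good_nsmul hD c.natAbs))
    intro i j k
    conv_lhs => rw [h]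
    ring

lemma Good_sum {n : ℕ} {ι : Type} (S : Finset ι) (f : ι → Fin n → Fin n → Fin n → ℤ)
    (h : ∀ x ∈ S, Good (f x)) :
    Good (fun i j k => ∑ x ∈ S, f x i j k) := by
  classical
  induction S using Finset.cons_induction with
  | empty => exact Good_congr (by simp) Good_zero
  | cons a S ha ih =>
    refine Good_congr (E := fun i j k => f a i j k + ∑ x ∈ S, f x i j k) ?_ ?_
    · intro i j k; rw [Finset.sum_cons]
    · exact Good_add (h a (Finset.mem_cons_self a S))
        (ih fun x hx => h x (Finset.mem_cons_of_mem hx))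

lemma Good_tblock {n : ℕ} (i₁ i₂ j₁ j₂ k₁ k₂ : Fin n)
    (h1 : i₁ < i₂) (h2 : j₁ < j₂) (h3 : k₁ < k₂) :
    Good (fun i j k => Tblock i₁ i₂ j₁ j₂ k₁ k₂ i j k) := by
  refine ⟨1, fun _ => 1, fun _ => i₁, fun _ => i₂, fun _ => j₁, fun _ => j₂,
    fun _ => k₁, fun _ => k₂, fun t => ⟨Or.inl rfl, h1, h2, h3⟩, fun i j k => ?_⟩
  rw [Fin.sum_univ_one, one_mul]

lemma tsign_eq {n : ℕ} (i : ℕ) (hi : i + 1 < n) (p : Fin n) :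
    tsign (⟨i, by omega⟩ : Fin n) ⟨i+1, hi⟩ p
      = (if (p:ℕ) = i then (1:ℤ) else 0) - (if (p:ℕ) = i+1 then 1 else 0) := by
  simp only [tsign, Fin.ext_iff]
  split_ifs <;> first | ring1 | (exfalso; omega)

/-! ### Main theorem -/

theorem ashm_difference_sum_of_tblocks {n : ℕ}
    (A B : Fin n → Fin n → Fin n → ℤ) (hA : IsASHM A) (hB : IsASHM B) :
    ∃ (m : ℕ) (ε : Fin m → ℤ) (i₁ i₂ j₁ j₂ k₁ k₂ : Fin m → Fin n),
      (∀ t, (ε t = 1 ∨ ε t = -1) ∧ i₁ t < i₂ t ∧ j₁ t < j₂ t ∧ k₁ t < k₂ t) ∧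
      ∀ i j k, A i j k - B i j k =
        ∑ t, ε t * Tblock (i₁ t) (i₂ t) (j₁ t) (j₂ t) (k₁ t) (k₂ t) i j k := by
  classical
  set D : Fin n → Fin n → Fin n → ℤ := fun p q r => A p q r - B p q r with hD
  have hl1 : ∀ q r, ∑ p, D p q r = 0 := by
    intro q r
    show ∑ p : Fin n, (A p q r - B p q r) = 0
    rw [Finset.sum_sub_distrib, altLine_sum (hA.1 q r), altLine_sum (hB.1 q r), sub_self]
  have hl2 : ∀ p r, ∑ q, D p q r = 0 := by
    intro p r
    show ∑ q : Fin n, (A p q r - B p q r) = 0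
    rw [Finset.sum_sub_distrib, altLine_sum (hA.2.1 p r), altLine_sum (hB.2.1 p r), sub_self]
  have hl3 : ∀ p q, ∑ r, D p q r = 0 := by
    intro p q
    show ∑ r : Fin n, (A p q r - B p q r) = 0
    rw [Finset.sum_sub_distrib, altLine_sum (hA.2.2 p q), altLine_sum (hB.2.2 p q), sub_self]
  set dfun : ℕ → Fin n → ℤ :=
    fun i p => (if (p:ℕ) = i then 1 else 0) - (if (p:ℕ) = i+1 then 1 else 0) with hdfun
  set s3 : Fin n → Fin n → ℕ → ℤ :=
    fun p q k => ∑ z : Fin n, if (z:ℕ) ≤ k then D p q z else 0 with hs3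
  set s2 : Fin n → ℕ → ℕ → ℤ :=
    fun p j k => ∑ y : Fin n, if (y:ℕ) ≤ j then s3 p y k else 0 with hs2
  set c : ℕ → ℕ → ℕ → ℤ :=
    fun i j k => ∑ x : Fin n, if (x:ℕ) ≤ i then s2 x j k else 0 with hc
  have step1 : ∀ p q r, D p q r = ∑ k ∈ Finset.range (n-1), s3 p q k * dfun k r :=
    fun p q r => tele (fun z => D p q z) (hl3 p q) r
  have hs3sum : ∀ p k, ∑ q, s3 p q k = 0 := by
    intro p k
    calc ∑ q, s3 p q k
        = ∑ z : Fin n, ∑ q : Fin n, (if (z:ℕ) ≤ k then D p q z else 0) := Finset.sum_comm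
      _ = 0 := by
        apply Finset.sum_eq_zero; intro z _
        by_cases h : (z:ℕ) ≤ k
        · simp only [if_pos h]; exact hl2 p z
        · simp only [if_neg h]; exact Finset.sum_const_zero
  have step2 : ∀ p q k, s3 p q k = ∑ j ∈ Finset.range (n-1), s2 p j k * dfun j q :=
    fun p q k => tele (fun y => s3 p y k) (hs3sum p k) q
  have hs2sum : ∀ j k, ∑ x, s2 x j k = 0 := by
    intro j k
    calc ∑ x, s2 x j k
        = ∑ y : Fin n, ∑ x : Fin n, (if (y:ℕ) ≤ j then s3 x y k else 0) := Finset.sum_comm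
      _ = 0 := by
        apply Finset.sum_eq_zero; intro y _
        by_cases h : (y:ℕ) ≤ j
        · simp only [if_pos h]
          calc ∑ x, s3 x y k
              = ∑ z : Fin n, ∑ x : Fin n, (if (z:ℕ) ≤ k then D x y z else 0) :=
                Finset.sum_comm
            _ = 0 := by
              apply Finset.sum_eq_zero; intro z _
              by_cases h' : (z:ℕ) ≤ k
              · simp only [if_pos h']; exact hl1 y z
              · simp only [if_neg h']; exact Finset.sum_const_zero
        · simp only [if_neg h]; exact Finset.sum_const_zero
  have step3 : ∀ p j k, s2 p j k = ∑ i ∈ Finset.range (n-1), c i j k * dfun i p :=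
    fun p j k => tele (fun x => s2 x j k) (hs2sum j k) p
  have key : ∀ p q r, D p q r =
      ∑ k ∈ Finset.range (n-1), ∑ j ∈ Finset.range (n-1), ∑ i ∈ Finset.range (n-1),
        c i j k * (dfun i p * dfun j q * dfun k r) := by
    intro p q r
    rw [step1]
    apply Finset.sum_congr rfl; intro k _
    rw [step2, Finset.sum_mul]
    apply Finset.sum_congr rfl; intro j _
    rw [step3, Finset.sum_mul, Finset.sum_mul]
    apply Finset.sum_congr rfl; intro i _
    ring
  have good : Good (fun p q r =>
      ∑ k ∈ Finset.range (n-1), ∑ j ∈ Finset.range (n-1), ∑ i ∈ Finset.range (n-1),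
        c i j k * (dfun i p * dfun j q * dfun k r)) := by
    apply Good_sum; intro k hk
    apply Good_sum; intro j hj
    apply Good_sum; intro i hi
    rw [Finset.mem_range] at hk hj hi
    have hi' : i + 1 < n := by omega
    have hj' : j + 1 < n := by omega
    have hk' : k + 1 < n := by omega
    refine Good_congr ?_ (Good_smul (Good_tblock (⟨i, by omega⟩ : Fin n) ⟨i+1, hi'⟩
      ⟨j, by omega⟩ ⟨j+1, hj'⟩ ⟨k, by omega⟩ ⟨k+1, hk'⟩
      (by simp [Fin.mk_lt_mk]) (by simp [Fin.mk_lt_mk]) (by simp [Fin.mk_lt_mk]))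
      (c i j k))
    intro p q r
    show c i j k * (dfun i p * dfun j q * dfun k r) = c i j k * Tblock _ _ _ _ _ _ p q r
    rw [Tblock, tsign_eq i hi' p, tsign_eq j hj' q, tsign_eq k hk' r]
  have goodD : Good D := Good_congr key good
  obtain ⟨m, ε, i₁, i₂, j₁, j₂, k₁, k₂, hcond, heq⟩ := goodD
  exact ⟨m, ε, i₁, i₂, j₁, j₂, k₁, k₂, hcond, fun i j k => heq i j k⟩
end

section
/- Two n × n × n alternating sign hypermatrices A and B satisfy L(A) = L(B) if and only if A − B can be expressed as a sum of pairs of T-blocks, where in each pair the two T-blocks have opposite depth and occupy the same pair of vertical-line positions. -/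
open Finset

namespace ADP

/-! ### Discrete calculus on `ℕ → ℤ` -/

def pre (f : ℕ → ℤ) (k : ℕ) : ℤ := if k = 0 then 0 else f (k - 1)

def cs (f : ℕ → ℤ) (k : ℕ) : ℤ := ∑ x ∈ Finset.range (k + 1), f x

def ee (i a : ℕ) : ℤ := (if a = i then 1 else 0) - (if a = i + 1 then 1 else 0)

lemma cs_zero (f : ℕ → ℤ) : cs f 0 = f 0 := by simp [cs]

lemma cs_succ (f : ℕ → ℤ) (k : ℕ) : cs f (k + 1) = cs f k + f (k + 1) :=
  Finset.sum_range_succ _ _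

lemma cs_sub_pre (f : ℕ → ℤ) (k : ℕ) : cs f k - pre (cs f) k = f k := by
  cases k with
  | zero => simp [cs, pre]
  | succ m => simp [pre, cs_succ]

lemma sum_ite_pt {N a : ℕ} (f : ℕ → ℤ) (ha : a < N) :
    ∑ i ∈ range N, f i * (if a = i then 1 else 0) = f a := by
  simp only [mul_ite, mul_one, mul_zero]
  rw [Finset.sum_ite_eq]
  simp [ha]

lemma sum_ite_pt1 {N a : ℕ} (f : ℕ → ℤ) (ha : a < N) :
    ∑ i ∈ range N, f i * (if a = i + 1 then 1 else 0) = pre f a := by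
  cases a with
  | zero => simp [pre]
  | succ m =>
    simp only [mul_ite, mul_one, mul_zero, add_left_inj]
    rw [Finset.sum_ite_eq]
    simp [pre, show m ∈ range N by simp; omega]

lemma sum_ite_pt2 {N a : ℕ} (f : ℕ → ℤ) (ha : a < N) :
    ∑ i ∈ range N, f i * (if a = i + 2 then 1 else 0) = pre (pre f) a := by
  match a with
  | 0 => simp [pre]
  | 1 =>
    rw [Finset.sum_eq_zero]
    · simp [pre]
    · intro i _
      rw [if_neg (by omega), mul_zero]
  | (m + 2) =>
    simp only [mul_ite, mul_one, mul_zero,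
      show ∀ i : ℕ, (m + 2 = i + 2) ↔ (m = i) from fun i => by omega]
    rw [Finset.sum_ite_eq]
    simp [pre, show m ∈ range N by simp; omega]

lemma sum_ee (f : ℕ → ℤ) {N a : ℕ} (ha : a < N) :
    ∑ i ∈ range N, f i * ee i a = f a - pre f a := by
  simp only [ee, mul_sub]
  rw [Finset.sum_sub_distrib, sum_ite_pt f ha, sum_ite_pt1 f ha]

lemma sum_w (g : ℕ → ℤ) {N c : ℕ} (hc : c < N) :
    ∑ k ∈ range N, g k * (ee k c - ee (k + 1) c)
      = g c - 2 * pre g c + pre (pre g) c := by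
  have h : ∀ k, g k * (ee k c - ee (k + 1) c)
      = g k * (if c = k then 1 else 0) - 2 * (g k * (if c = k + 1 then 1 else 0))
        + g k * (if c = k + 2 then 1 else 0) := by
    intro k; simp only [ee]; ring_nf
  rw [Finset.sum_congr rfl fun k _ => h k]
  rw [Finset.sum_add_distrib, Finset.sum_sub_distrib, ← Finset.mul_sum,
    sum_ite_pt g hc, sum_ite_pt1 g hc, sum_ite_pt2 g hc]

lemma sum_cs (f : ℕ → ℤ) (N : ℕ) :
    ∑ x ∈ range N, cs f x = ∑ c ∈ range N, ((N : ℤ) - (c : ℤ)) * f c := by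
  induction N with
  | zero => simp
  | succ n ih =>
    rw [Finset.sum_range_succ, ih, cs, Finset.sum_range_succ f n,
      Finset.sum_range_succ (fun c => (((n + 1 : ℕ) : ℤ) - (c : ℤ)) * f c)]
    push_cast
    have h : ∑ c ∈ range n, (((n : ℤ) + 1) - (c : ℤ)) * f c
        = ∑ c ∈ range n, (((n : ℤ) - (c : ℤ)) * f c + f c) :=
      Finset.sum_congr rfl fun c _ => by ring
    rw [h, Finset.sum_add_distrib]
    ring

lemma pad {f : ℕ → ℤ} {p m : ℕ} (h : p ≤ m) (hf : ∀ x, p ≤ x → f x = 0) :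
    ∑ x ∈ range m, f x = ∑ x ∈ range p, f x :=
  (Finset.sum_subset (Finset.range_subset_range.mpr h)
    (fun x hx hx' => hf x (by simp at hx hx'; omega))).symm

lemma D2_cs (F : ℕ → ℤ) (c : ℕ) :
    cs (cs F) c - 2 * pre (cs (cs F)) c + pre (pre (cs (cs F))) c = F c := by
  match c with
  | 0 => simp [pre, cs_zero]
  | 1 => simp [pre, cs_succ, cs_zero]; ring
  | (m + 2) => simp [pre, cs_succ]; ring

/-! ### 3D corner sums -/

variable (d : ℕ → ℕ → ℕ → ℤ)

def TT (i b c : ℕ) : ℤ := cs (fun a => d a b c) i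
def SS (i j c : ℕ) : ℤ := cs (fun b => TT d i b c) j
def UU (i j k : ℕ) : ℤ := cs (fun c => SS d i j c) k
def QQ (i j k : ℕ) : ℤ := cs (fun x => UU d i j x) k

lemma key1 {n a b c : ℕ} (ha : a < n) (hb : b < n) (hc : c < n) :
    ∑ i ∈ range n, ∑ j ∈ range n, ∑ k ∈ range n,
      QQ d i j k * (ee i a * (ee j b * (ee k c - ee (k + 1) c))) = d a b c := by
  have hD2 : ∀ i j, QQ d i j c - 2 * pre (fun x => QQ d i j x) c
      + pre (pre (fun x => QQ d i j x)) c = SS d i j c := fun i j => D2_cs (SS d i j) c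
  have hk : ∀ i j, ∑ k ∈ range n, QQ d i j k * (ee i a * (ee j b * (ee k c - ee (k + 1) c)))
      = ee i a * (ee j b * SS d i j c) := by
    intro i j
    have h1 : ∀ k, QQ d i j k * (ee i a * (ee j b * (ee k c - ee (k + 1) c)))
        = (ee i a * ee j b) * (QQ d i j k * (ee k c - ee (k + 1) c)) := fun k => by ring
    rw [Finset.sum_congr rfl fun k _ => h1 k, ← Finset.mul_sum, sum_w _ hc, hD2 i j]
    ring
  rw [Finset.sum_congr rfl fun i _ => Finset.sum_congr rfl fun j _ => hk i j]
  have hj : ∀ i, ∑ j ∈ range n, ee i a * (ee j b * SS d i j c) = ee i a * TT d i b c := by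
    intro i
    rw [← Finset.mul_sum]
    congr 1
    rw [Finset.sum_congr rfl fun j _ => mul_comm (ee j b) (SS d i j c), sum_ee _ hb]
    exact cs_sub_pre (fun b' => TT d i b' c) b
  rw [Finset.sum_congr rfl fun i _ => hj i,
    Finset.sum_congr rfl fun i _ => mul_comm (ee i a) (TT d i b c), sum_ee _ ha]
  exact cs_sub_pre (fun a' => d a' b c) a

variable {n : ℕ}
variable (hd : ∀ a b c, n ≤ a ∨ n ≤ b ∨ n ≤ c → d a b c = 0)
  (H1 : ∀ b c, ∑ a ∈ range n, d a b c = 0)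
  (H2 : ∀ a c, ∑ b ∈ range n, d a b c = 0)
  (H3 : ∀ a b, ∑ c ∈ range n, d a b c = 0)
  (H4 : ∀ a b, ∑ c ∈ range n, (c : ℤ) * d a b c = 0)

include hd H1 in
lemma Tz {i : ℕ} (hi : n ≤ i + 1) (b c : ℕ) : TT d i b c = 0 := by
  unfold TT cs
  rw [pad (p := n) (by omega) (fun x hx => hd x b c (Or.inl hx))]
  exact H1 b c

include hd H2 in
lemma Sz {j : ℕ} (hj : n ≤ j + 1) (i c : ℕ) : SS d i j c = 0 := by
  unfold SS TT cs
  rw [pad (p := n) (by omega) (fun x hx => Finset.sum_eq_zero fun a _ => hd a x c (Or.inr (Or.inl hx)))]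
  rw [Finset.sum_comm]
  exact Finset.sum_eq_zero fun a _ => H2 a c

include hd in
lemma SzC {c : ℕ} (hc : n ≤ c) (i j : ℕ) : SS d i j c = 0 := by
  unfold SS TT cs
  exact Finset.sum_eq_zero fun b _ => Finset.sum_eq_zero fun a _ => hd a b c (Or.inr (Or.inr hc))

include H3 in
lemma sumS (i j : ℕ) : ∑ c ∈ range n, SS d i j c = 0 := by
  unfold SS TT cs
  rw [Finset.sum_comm]
  refine Finset.sum_eq_zero fun b _ => ?_
  rw [Finset.sum_comm]
  exact Finset.sum_eq_zero fun a _ => H3 a b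

include hd H3 in
lemma Uz {k : ℕ} (hk : n ≤ k + 1) (i j : ℕ) : UU d i j k = 0 := by
  unfold UU cs
  rw [pad (p := n) (by omega) (fun x hx => SzC d hd hx i j)]
  exact sumS d H3 i j

include H3 H4 in
lemma sumU (i j : ℕ) : ∑ x ∈ range n, UU d i j x = 0 := by
  have h1 : ∑ x ∈ range n, UU d i j x = ∑ c ∈ range n, ((n : ℤ) - (c : ℤ)) * SS d i j c :=
    sum_cs (fun c' => SS d i j c') n
  rw [h1, Finset.sum_congr rfl fun (c : ℕ) _ =>
    show ((n : ℤ) - (c : ℤ)) * SS d i j c = (n : ℤ) * SS d i j c - (c : ℤ) * SS d i j c by ring]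
  rw [Finset.sum_sub_distrib, ← Finset.mul_sum, sumS d H3 i j, mul_zero]
  have h3 : ∑ c ∈ range n, (c : ℤ) * SS d i j c = 0 := by
    unfold SS TT cs
    simp_rw [Finset.mul_sum]
    rw [Finset.sum_comm]
    refine Finset.sum_eq_zero fun b _ => ?_
    rw [Finset.sum_comm]
    exact Finset.sum_eq_zero fun a _ => H4 a b
  rw [h3]
  ring

include hd H1 in
lemma Qz1 {i : ℕ} (hi : n ≤ i + 1) (j k : ℕ) : QQ d i j k = 0 := by
  unfold QQ UU SS cs
  exact Finset.sum_eq_zero fun x _ => Finset.sum_eq_zero fun c _ =>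
    Finset.sum_eq_zero fun b _ => Tz d hd H1 hi b c

include hd H2 in
lemma Qz2 {j : ℕ} (hj : n ≤ j + 1) (i k : ℕ) : QQ d i j k = 0 := by
  unfold QQ UU cs
  exact Finset.sum_eq_zero fun x _ => Finset.sum_eq_zero fun c _ => Sz d hd H2 hj i c

include hd H3 H4 in
lemma Qz3 {k : ℕ} (hk : n ≤ k + 2) (i j : ℕ) : QQ d i j k = 0 := by
  have hU : ∀ x, n - 1 ≤ x → UU d i j x = 0 := fun x hx => Uz d hd H3 (k := x) (by omega) i j
  have e1 : QQ d i j k = ∑ x ∈ range (n - 1), UU d i j x := by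
    unfold QQ cs
    exact pad (by omega) hU
  rw [e1, ← pad (show n - 1 ≤ n by omega) hU]
  exact sumU d H3 H4 i j

include hd H1 H2 H3 H4 in
lemma shrink (F : ℕ → ℕ → ℕ → ℤ) :
    ∑ i ∈ range (n - 1), ∑ j ∈ range (n - 1), ∑ k ∈ range (n - 2), QQ d i j k * F i j k
      = ∑ i ∈ range n, ∑ j ∈ range n, ∑ k ∈ range n, QQ d i j k * F i j k := by
  have hk : ∀ i j, ∑ k ∈ range (n - 2), QQ d i j k * F i j k
      = ∑ k ∈ range n, QQ d i j k * F i j k := fun i j =>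
    Finset.sum_subset (Finset.range_subset_range.mpr (by omega))
      (fun k hk1 hk2 => by
        rw [Qz3 d hd H3 H4 (k := k) (by simp at hk1 hk2; omega) i j, zero_mul])
  rw [Finset.sum_congr rfl fun i _ => Finset.sum_congr rfl fun j _ => hk i j]
  have hj : ∀ i, ∑ j ∈ range (n - 1), ∑ k ∈ range n, QQ d i j k * F i j k
      = ∑ j ∈ range n, ∑ k ∈ range n, QQ d i j k * F i j k := fun i =>
    Finset.sum_subset (Finset.range_subset_range.mpr (by omega))
      (fun j hj1 hj2 => Finset.sum_eq_zero fun k _ => by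
        rw [Qz2 d hd H2 (j := j) (by simp at hj1 hj2; omega) i k, zero_mul])
  rw [Finset.sum_congr rfl fun i _ => hj i]
  exact Finset.sum_subset (Finset.range_subset_range.mpr (by omega))
    (fun i hi1 hi2 => Finset.sum_eq_zero fun j _ => Finset.sum_eq_zero fun k _ => by
      rw [Qz1 d hd H1 (i := i) (by simp at hi1 hi2; omega) j k, zero_mul])

/-! ### AltLine sums -/

lemma filter_sum (l : List ℤ) : (l.filter (· != 0)).sum = l.sum := by
  induction l with
  | nil => rfl
  | cons x xs ih =>
    by_cases hx : x = 0
    · simp [List.filter_cons, hx, ih]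
    · simp [List.filter_cons, hx, ih]

lemma altLine_sum {n : ℕ} {f : Fin n → ℤ} (h : AltLine f) : ∑ i, f i = 1 := by
  obtain ⟨hne, hget, hlast⟩ := h
  have hsum : ∑ i, f i = (nonzeroList f).sum := by
    rw [Fin.sum_univ_def, ← filter_sum ((List.finRange n).map f)]
    rfl
  set l := nonzeroList f with hl
  have hlen : 0 < l.length := List.length_pos_iff.mpr hne
  have hlast2 : l.getLast hne = 1 := by
    rwa [List.getLast?_eq_getLast hne, Option.some_inj] at hlast
  have hlast3 : ((-1 : ℤ)) ^ (l.length - 1) = 1 := by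
    rw [← hget (l.length - 1) (by omega), List.get_eq_getElem, ← List.getLast_eq_getElem hne]
    exact hlast2
  have hev : Even (l.length - 1) := (neg_one_pow_eq_one_iff_even (by norm_num)).mp hlast3
  have hodd : Odd l.length := by
    have h2 := hev.add_one
    have h3 : l.length - 1 + 1 = l.length := by omega
    rwa [h3] at h2
  have hsum2 : l.sum = ∑ i ∈ Finset.range l.length, (-1 : ℤ) ^ i := by
    conv_lhs => rw [← List.map_get_finRange l]
    rw [← Fin.sum_univ_def, ← Fin.sum_univ_eq_sum_range (fun i => (-1 : ℤ) ^ i)]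
    exact Finset.sum_congr rfl fun i _ => hget i.1 i.isLt
  rw [hsum, hsum2, neg_one_geom_sum, if_neg (Nat.not_even_iff_odd.mpr hodd)]

/-! ### The list of T-block pairs -/

def mkF (n : ℕ) (hn : 0 < n) (x : ℕ) : Fin n := ⟨x % n, Nat.mod_lt x hn⟩

lemma mkF_val {n : ℕ} (hn : 0 < n) {x : ℕ} (hx : x < n) : (mkF n hn x : ℕ) = x :=
  Nat.mod_eq_of_lt hx

structure Tup (n : ℕ) where
  a1 : Fin n
  a2 : Fin n
  b1 : Fin n
  b2 : Fin n
  e1 : ℤ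
  e2 : ℤ
  c1 : Fin n
  c2 : Fin n
  c3 : Fin n
  c4 : Fin n

def mkTup (n : ℕ) (hn : 0 < n) (q : ℕ → ℕ → ℕ → ℤ) (i j k : ℕ) : Tup n :=
  ⟨mkF n hn i, mkF n hn (i + 1), mkF n hn j, mkF n hn (j + 1),
    (if 0 ≤ q i j k then 1 else -1), (if 0 ≤ q i j k then -1 else 1),
    mkF n hn k, mkF n hn (k + 1), mkF n hn (k + 1), mkF n hn (k + 2)⟩

def theList (n : ℕ) (hn : 0 < n) (q : ℕ → ℕ → ℕ → ℤ) : List (Tup n) :=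
  (List.range (n - 1)).flatMap fun i =>
    (List.range (n - 1)).flatMap fun j =>
      (List.range (n - 2)).flatMap fun k =>
        List.replicate (q i j k).natAbs (mkTup n hn q i j k)

lemma mem_theList {n : ℕ} {hn : 0 < n} {q : ℕ → ℕ → ℕ → ℤ} {x : Tup n}
    (hx : x ∈ theList n hn q) :
    ∃ i j k, i + 1 < n ∧ j + 1 < n ∧ k + 2 < n ∧ x = mkTup n hn q i j k := by
  simp only [theList, List.mem_flatMap, List.mem_range, List.mem_replicate] at hx
  obtain ⟨i, hi, j, hj, k, hk, _, rfl⟩ := hx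
  exact ⟨i, j, k, by omega, by omega, by omega, rfl⟩

lemma sum_get {α : Type*} (l : List α) (g : α → ℤ) :
    ∑ t : Fin l.length, g (l.get t) = (l.map g).sum := by
  conv_rhs => rw [← List.map_get_finRange l]
  rw [List.map_map, Fin.sum_univ_def]
  rfl

lemma sum_map_flatMap {α : Type*} (g : α → ℤ) (N : ℕ) (f : ℕ → List α) :
    (((List.range N).flatMap f).map g).sum = ∑ x ∈ Finset.range N, ((f x).map g).sum := by
  induction N with
  | zero => rfl
  | succ m ih =>
    rw [List.range_succ, List.flatMap_append, List.map_append, List.sum_append, ih,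
      Finset.sum_range_succ]
    simp

lemma sum_theList {n : ℕ} (hn : 0 < n) (q : ℕ → ℕ → ℕ → ℤ) (g : Tup n → ℤ) :
    ∑ t : Fin (theList n hn q).length, g ((theList n hn q).get t)
      = ∑ i ∈ range (n - 1), ∑ j ∈ range (n - 1), ∑ k ∈ range (n - 2),
          ((q i j k).natAbs : ℤ) * g (mkTup n hn q i j k) := by
  rw [sum_get, theList, sum_map_flatMap]
  refine Finset.sum_congr rfl fun i _ => ?_
  rw [sum_map_flatMap]
  refine Finset.sum_congr rfl fun j _ => ?_
  rw [sum_map_flatMap]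
  refine Finset.sum_congr rfl fun k _ => ?_
  rw [List.map_replicate, List.sum_replicate, nsmul_eq_mul]

lemma tsign_mkF {n : ℕ} (hn : 0 < n) {x : ℕ} (hx : x + 1 < n) (z : Fin n) :
    tsign (mkF n hn x) (mkF n hn (x + 1)) z = ee x (z : ℕ) := by
  have e1 : (mkF n hn x : ℕ) = x := mkF_val hn (by omega)
  have e2 : (mkF n hn (x + 1) : ℕ) = x + 1 := mkF_val hn hx
  unfold tsign ee
  simp only [Fin.ext_iff, e1, e2]
  by_cases h1 : (z : ℕ) = x <;> by_cases h2 : (z : ℕ) = x + 1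
  · omega
  · simp [h1, h2]
  · simp [h1, h2]
  · simp [h1, h2]

lemma tsign_mkF2 {n : ℕ} (hn : 0 < n) {x : ℕ} (hx : x + 2 < n) (z : Fin n) :
    tsign (mkF n hn (x + 1)) (mkF n hn (x + 2)) z = ee (x + 1) (z : ℕ) := by
  have h := tsign_mkF hn (x := x + 1) (by omega) z
  have h12 : x + 1 + 1 = x + 2 := by omega
  rwa [h12] at h

lemma tsign_wsum {n : ℕ} {p r : Fin n} (hpr : p ≠ r) :
    ∑ c : Fin n, (((c : ℕ) : ℤ) + 1) * tsign p r c = ((p : ℕ) : ℤ) - ((r : ℕ) : ℤ) := by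
  have h : ∀ c : Fin n, tsign p r c
      = (if c = p then 1 else 0) - (if c = r then 1 else 0) := by
    intro c
    unfold tsign
    by_cases h1 : c = p <;> by_cases h2 : c = r
    · exact absurd (h1 ▸ h2) hpr
    · simp [h1, h2, hpr]
    · simp [h1, h2, Ne.symm hpr]
    · simp [h1, h2]
  rw [Finset.sum_congr rfl fun c _ => by rw [h c]]
  simp_rw [mul_sub, mul_ite, mul_one, mul_zero]
  rw [Finset.sum_sub_distrib, Finset.sum_ite_eq' Finset.univ p, Finset.sum_ite_eq' Finset.univ r]
  simp
  try ring

lemma tup_prop {n : ℕ} {hn : 0 < n} {q : ℕ → ℕ → ℕ → ℤ} {x : Tup n}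
    (hx : x ∈ theList n hn q) :
    x.a1 < x.a2 ∧ x.b1 < x.b2 ∧ x.c1 < x.c2 ∧ x.c3 < x.c4 ∧
    (x.e1 = 1 ∨ x.e1 = -1) ∧ (x.e2 = 1 ∨ x.e2 = -1) ∧
    x.e1 * (((x.c2 : ℕ) : ℤ) - ((x.c1 : ℕ) : ℤ))
      = -(x.e2 * (((x.c4 : ℕ) : ℤ) - ((x.c3 : ℕ) : ℤ))) := by
  obtain ⟨i, j, k, hi, hj, hk, rfl⟩ := mem_theList hx
  simp only [mkTup]
  have v1 : (mkF n hn i : ℕ) = i := mkF_val hn (by omega)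
  have v2 : (mkF n hn (i + 1) : ℕ) = i + 1 := mkF_val hn (by omega)
  have v3 : (mkF n hn j : ℕ) = j := mkF_val hn (by omega)
  have v4 : (mkF n hn (j + 1) : ℕ) = j + 1 := mkF_val hn (by omega)
  have v5 : (mkF n hn k : ℕ) = k := mkF_val hn (by omega)
  have v6 : (mkF n hn (k + 1) : ℕ) = k + 1 := mkF_val hn (by omega)
  have v7 : (mkF n hn (k + 2) : ℕ) = k + 2 := mkF_val hn (by omega)
  refine ⟨?_, ?_, ?_, ?_, ?_, ?_, ?_⟩
  · rw [Fin.lt_def, v1, v2]; omega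
  · rw [Fin.lt_def, v3, v4]; omega
  · rw [Fin.lt_def, v5, v6]; omega
  · rw [Fin.lt_def, v6, v7]; omega
  · by_cases h0 : 0 ≤ q i j k <;> simp [h0]
  · by_cases h0 : 0 ≤ q i j k <;> simp [h0]
  · rw [v5, v6, v7]
    by_cases h0 : 0 ≤ q i j k <;> simp [h0] <;> push_cast <;> ring

lemma point_eq {n : ℕ} (hn : 0 < n) (q : ℕ → ℕ → ℕ → ℤ) (a b c : Fin n)
    {i j k : ℕ} (hi : i + 1 < n) (hj : j + 1 < n) (hk : k + 2 < n) :
    (((q i j k).natAbs : ℤ)) *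
      ((mkTup n hn q i j k).e1 * Tblock (mkTup n hn q i j k).a1 (mkTup n hn q i j k).a2
          (mkTup n hn q i j k).b1 (mkTup n hn q i j k).b2 (mkTup n hn q i j k).c1
          (mkTup n hn q i j k).c2 a b c
        + (mkTup n hn q i j k).e2 * Tblock (mkTup n hn q i j k).a1 (mkTup n hn q i j k).a2
          (mkTup n hn q i j k).b1 (mkTup n hn q i j k).b2 (mkTup n hn q i j k).c3
          (mkTup n hn q i j k).c4 a b c)
      = q i j k * (ee i ↑a * (ee j ↑b * (ee k ↑c - ee (k + 1) ↑c))) := by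
  simp only [mkTup, Tblock]
  rw [tsign_mkF hn hi a, tsign_mkF hn hj b, tsign_mkF hn (x := k) (by omega) c,
    tsign_mkF2 hn hk c]
  by_cases h0 : 0 ≤ q i j k
  · rw [if_pos h0, if_pos h0, Int.natAbs_of_nonneg h0]; ring
  · rw [if_neg h0, if_neg h0, Int.ofNat_natAbs_of_nonpos (by omega)]; ring

end ADP

theorem ashl_eq_iff_opposite_depth_pairs {n : ℕ}
    (A B : Fin n → Fin n → Fin n → ℤ) (hA : IsASHM A) (hB : IsASHM B) :
    ashl A = ashl B ↔
      ∃ (m : ℕ) (i₁ i₂ j₁ j₂ : Fin m → Fin n)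
        (ε ε' : Fin m → ℤ) (k₁ k₂ k₁' k₂' : Fin m → Fin n),
        (∀ t, i₁ t < i₂ t ∧ j₁ t < j₂ t ∧ k₁ t < k₂ t ∧ k₁' t < k₂' t ∧
          (ε t = 1 ∨ ε t = -1) ∧ (ε' t = 1 ∨ ε' t = -1) ∧
          ε t * (((k₂ t : ℕ) : ℤ) - ((k₁ t : ℕ) : ℤ)) =
            -(ε' t * (((k₂' t : ℕ) : ℤ) - ((k₁' t : ℕ) : ℤ)))) ∧
        ∀ i j k, A i j k - B i j k =
          ∑ t, (ε t * Tblock (i₁ t) (i₂ t) (j₁ t) (j₂ t) (k₁ t) (k₂ t) i j k +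
            ε' t * Tblock (i₁ t) (i₂ t) (j₁ t) (j₂ t) (k₁' t) (k₂' t) i j k) := by
  constructor
  · intro hL
    rcases Nat.eq_zero_or_pos n with hn | hn
    · subst hn
      exact ⟨0, Fin.elim0, Fin.elim0, Fin.elim0, Fin.elim0, Fin.elim0, Fin.elim0, Fin.elim0,
        Fin.elim0, Fin.elim0, Fin.elim0, fun t => t.elim0, fun i => i.elim0⟩
    · classical
      set d : ℕ → ℕ → ℕ → ℤ := fun a b c =>
        if h : a < n ∧ b < n ∧ c < n then
          A ⟨a, h.1⟩ ⟨b, h.2.1⟩ ⟨c, h.2.2⟩ - B ⟨a, h.1⟩ ⟨b, h.2.1⟩ ⟨c, h.2.2⟩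
        else 0 with hd_def
      have hd : ∀ a b c, n ≤ a ∨ n ≤ b ∨ n ≤ c → d a b c = 0 := by
        intro a b c h
        simp only [hd_def]
        rw [dif_neg (by omega)]
      have dvalN : ∀ (a b c : ℕ) (ha : a < n) (hb : b < n) (hc : c < n),
          d a b c = A ⟨a, ha⟩ ⟨b, hb⟩ ⟨c, hc⟩ - B ⟨a, ha⟩ ⟨b, hb⟩ ⟨c, hc⟩ := by
        intro a b c ha hb hc
        simp only [hd_def]
        rw [dif_pos ⟨ha, hb, hc⟩]
      have dval : ∀ a b c : Fin n, d ↑a ↑b ↑c = A a b c - B a b c := by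
        intro a b c
        rw [dvalN ↑a ↑b ↑c a.isLt b.isLt c.isLt]
      have H1 : ∀ b c, ∑ a ∈ range n, d a b c = 0 := by
        intro b c
        by_cases h : b < n ∧ c < n
        · rw [Finset.sum_range (fun a => d a b c),
            Finset.sum_congr rfl fun (a : Fin n) _ => dvalN ↑a b c a.isLt h.1 h.2,
            Finset.sum_sub_distrib]
          simp only [Fin.eta]
          rw [ADP.altLine_sum (hA.1 ⟨b, h.1⟩ ⟨c, h.2⟩),
            ADP.altLine_sum (hB.1 ⟨b, h.1⟩ ⟨c, h.2⟩), sub_self]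
        · exact Finset.sum_eq_zero fun a _ => hd a b c (by omega)
      have H2 : ∀ a c, ∑ b ∈ range n, d a b c = 0 := by
        intro a c
        by_cases h : a < n ∧ c < n
        · rw [Finset.sum_range (fun b => d a b c),
            Finset.sum_congr rfl fun (b : Fin n) _ => dvalN a ↑b c h.1 b.isLt h.2,
            Finset.sum_sub_distrib]
          simp only [Fin.eta]
          rw [ADP.altLine_sum (hA.2.1 ⟨a, h.1⟩ ⟨c, h.2⟩),
            ADP.altLine_sum (hB.2.1 ⟨a, h.1⟩ ⟨c, h.2⟩), sub_self]
        · exact Finset.sum_eq_zero fun b _ => hd a b c (by omega)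
      have H3 : ∀ a b, ∑ c ∈ range n, d a b c = 0 := by
        intro a b
        by_cases h : a < n ∧ b < n
        · rw [Finset.sum_range (fun c => d a b c),
            Finset.sum_congr rfl fun (c : Fin n) _ => dvalN a b ↑c h.1 h.2 c.isLt,
            Finset.sum_sub_distrib]
          simp only [Fin.eta]
          rw [ADP.altLine_sum (hA.2.2 ⟨a, h.1⟩ ⟨b, h.2⟩),
            ADP.altLine_sum (hB.2.2 ⟨a, h.1⟩ ⟨b, h.2⟩), sub_self]
        · exact Finset.sum_eq_zero fun c _ => hd a b c (by omega)
      have H4 : ∀ a b, ∑ c ∈ range n, (c : ℤ) * d a b c = 0 := by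
        intro a b
        by_cases h : a < n ∧ b < n
        · have hab := congrFun (congrFun hL ⟨a, h.1⟩) ⟨b, h.2⟩
          simp only [ashl] at hab
          have h3 : ∑ c : Fin n, (A ⟨a, h.1⟩ ⟨b, h.2⟩ c - B ⟨a, h.1⟩ ⟨b, h.2⟩ c) = 0 := by
            rw [Finset.sum_sub_distrib, ADP.altLine_sum (hA.2.2 ⟨a, h.1⟩ ⟨b, h.2⟩),
              ADP.altLine_sum (hB.2.2 ⟨a, h.1⟩ ⟨b, h.2⟩), sub_self]
          rw [Finset.sum_range (fun c => (c : ℤ) * d a b c),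
            Finset.sum_congr rfl fun (c : Fin n) _ => by
              rw [dvalN a b ↑c h.1 h.2 c.isLt]]
          simp only [Fin.eta]
          rw [Finset.sum_congr rfl fun (c : Fin n) _ =>
            show ((c : ℕ) : ℤ) * (A ⟨a, h.1⟩ ⟨b, h.2⟩ c - B ⟨a, h.1⟩ ⟨b, h.2⟩ c)
              = (((c : ℕ) : ℤ) + 1) * A ⟨a, h.1⟩ ⟨b, h.2⟩ c
                - (((c : ℕ) : ℤ) + 1) * B ⟨a, h.1⟩ ⟨b, h.2⟩ c
                - (A ⟨a, h.1⟩ ⟨b, h.2⟩ c - B ⟨a, h.1⟩ ⟨b, h.2⟩ c) from by ring]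
          rw [Finset.sum_sub_distrib, Finset.sum_sub_distrib, h3, sub_zero, hab, sub_self]
        · exact Finset.sum_eq_zero fun c _ => by
            rw [hd a b c (by omega), mul_zero]
      refine ⟨(ADP.theList n hn (ADP.QQ d)).length,
        fun t => ((ADP.theList n hn (ADP.QQ d)).get t).a1,
        fun t => ((ADP.theList n hn (ADP.QQ d)).get t).a2,
        fun t => ((ADP.theList n hn (ADP.QQ d)).get t).b1,
        fun t => ((ADP.theList n hn (ADP.QQ d)).get t).b2,
        fun t => ((ADP.theList n hn (ADP.QQ d)).get t).e1,
        fun t => ((ADP.theList n hn (ADP.QQ d)).get t).e2,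
        fun t => ((ADP.theList n hn (ADP.QQ d)).get t).c1,
        fun t => ((ADP.theList n hn (ADP.QQ d)).get t).c2,
        fun t => ((ADP.theList n hn (ADP.QQ d)).get t).c3,
        fun t => ((ADP.theList n hn (ADP.QQ d)).get t).c4, ?_, ?_⟩
      · intro t
        exact ADP.tup_prop (List.get_mem (ADP.theList n hn (ADP.QQ d)) t)
      · intro a b c
        calc A a b c - B a b c = d ↑a ↑b ↑c := (dval a b c).symm
          _ = ∑ i ∈ range n, ∑ j ∈ range n, ∑ k ∈ range n,
                ADP.QQ d i j k * (ADP.ee i ↑a * (ADP.ee j ↑b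
                  * (ADP.ee k ↑c - ADP.ee (k + 1) ↑c))) :=
            (ADP.key1 d a.isLt b.isLt c.isLt).symm
          _ = ∑ i ∈ range (n - 1), ∑ j ∈ range (n - 1), ∑ k ∈ range (n - 2),
                ADP.QQ d i j k * (ADP.ee i ↑a * (ADP.ee j ↑b
                  * (ADP.ee k ↑c - ADP.ee (k + 1) ↑c))) :=
            (ADP.shrink d hd H1 H2 H3 H4
              (fun i j k => ADP.ee i ↑a * (ADP.ee j ↑b
                * (ADP.ee k ↑c - ADP.ee (k + 1) ↑c)))).symm
          _ = ∑ i ∈ range (n - 1), ∑ j ∈ range (n - 1), ∑ k ∈ range (n - 2),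
                (((ADP.QQ d i j k).natAbs : ℤ)) *
                  ((ADP.mkTup n hn (ADP.QQ d) i j k).e1
                      * Tblock (ADP.mkTup n hn (ADP.QQ d) i j k).a1
                        (ADP.mkTup n hn (ADP.QQ d) i j k).a2
                        (ADP.mkTup n hn (ADP.QQ d) i j k).b1
                        (ADP.mkTup n hn (ADP.QQ d) i j k).b2
                        (ADP.mkTup n hn (ADP.QQ d) i j k).c1
                        (ADP.mkTup n hn (ADP.QQ d) i j k).c2 a b c
                    + (ADP.mkTup n hn (ADP.QQ d) i j k).e2
                      * Tblock (ADP.mkTup n hn (ADP.QQ d) i j k).a1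
                        (ADP.mkTup n hn (ADP.QQ d) i j k).a2
                        (ADP.mkTup n hn (ADP.QQ d) i j k).b1
                        (ADP.mkTup n hn (ADP.QQ d) i j k).b2
                        (ADP.mkTup n hn (ADP.QQ d) i j k).c3
                        (ADP.mkTup n hn (ADP.QQ d) i j k).c4 a b c) := by
            refine Finset.sum_congr rfl fun i hi => Finset.sum_congr rfl fun j hj =>
              Finset.sum_congr rfl fun k hk => ?_
            exact (ADP.point_eq hn (ADP.QQ d) a b c
              (by simp at hi; omega) (by simp at hj; omega) (by simp at hk; omega)).symm
          _ = ∑ t : Fin (ADP.theList n hn (ADP.QQ d)).length,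
                (((ADP.theList n hn (ADP.QQ d)).get t).e1
                    * Tblock ((ADP.theList n hn (ADP.QQ d)).get t).a1
                      ((ADP.theList n hn (ADP.QQ d)).get t).a2
                      ((ADP.theList n hn (ADP.QQ d)).get t).b1
                      ((ADP.theList n hn (ADP.QQ d)).get t).b2
                      ((ADP.theList n hn (ADP.QQ d)).get t).c1
                      ((ADP.theList n hn (ADP.QQ d)).get t).c2 a b c
                  + ((ADP.theList n hn (ADP.QQ d)).get t).e2
                    * Tblock ((ADP.theList n hn (ADP.QQ d)).get t).a1
                      ((ADP.theList n hn (ADP.QQ d)).get t).a2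
                      ((ADP.theList n hn (ADP.QQ d)).get t).b1
                      ((ADP.theList n hn (ADP.QQ d)).get t).b2
                      ((ADP.theList n hn (ADP.QQ d)).get t).c3
                      ((ADP.theList n hn (ADP.QQ d)).get t).c4 a b c) :=
            (ADP.sum_theList hn (ADP.QQ d)
              (fun x => x.e1 * Tblock x.a1 x.a2 x.b1 x.b2 x.c1 x.c2 a b c
                + x.e2 * Tblock x.a1 x.a2 x.b1 x.b2 x.c3 x.c4 a b c)).symm
  · rintro ⟨m, i₁, i₂, j₁, j₂, ε, ε', k₁, k₂, k₁', k₂', hp, hs⟩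
    funext a b
    have key : ∀ t : Fin m, ∑ c : Fin n, (((c : ℕ) : ℤ) + 1) *
        (ε t * Tblock (i₁ t) (i₂ t) (j₁ t) (j₂ t) (k₁ t) (k₂ t) a b c
          + ε' t * Tblock (i₁ t) (i₂ t) (j₁ t) (j₂ t) (k₁' t) (k₂' t) a b c) = 0 := by
      intro t
      obtain ⟨h1, h2, h3, h4, h5, h6, h7⟩ := hp t
      have e1 : ∀ c : Fin n, (((c : ℕ) : ℤ) + 1) *
          (ε t * Tblock (i₁ t) (i₂ t) (j₁ t) (j₂ t) (k₁ t) (k₂ t) a b c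
            + ε' t * Tblock (i₁ t) (i₂ t) (j₁ t) (j₂ t) (k₁' t) (k₂' t) a b c)
          = (ε t * (tsign (i₁ t) (i₂ t) a * tsign (j₁ t) (j₂ t) b))
              * ((((c : ℕ) : ℤ) + 1) * tsign (k₁ t) (k₂ t) c)
            + (ε' t * (tsign (i₁ t) (i₂ t) a * tsign (j₁ t) (j₂ t) b))
              * ((((c : ℕ) : ℤ) + 1) * tsign (k₁' t) (k₂' t) c) := by
        intro c; simp only [Tblock]; ring
      rw [Finset.sum_congr rfl fun c _ => e1 c, Finset.sum_add_distrib,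
        ← Finset.mul_sum, ← Finset.mul_sum,
        ADP.tsign_wsum (ne_of_lt h3), ADP.tsign_wsum (ne_of_lt h4)]
      linear_combination (-(tsign (i₁ t) (i₂ t) a * tsign (j₁ t) (j₂ t) b)) * h7
    have main : ashl A a b - ashl B a b = 0 := by
      unfold ashl
      rw [← Finset.sum_sub_distrib,
        Finset.sum_congr rfl fun (c : Fin n) _ =>
          show (((c : ℕ) : ℤ) + 1) * A a b c - (((c : ℕ) : ℤ) + 1) * B a b c
            = (((c : ℕ) : ℤ) + 1) * (A a b c - B a b c) from by ring,
        Finset.sum_congr rfl fun (c : Fin n) _ => by rw [hs a b c],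
        Finset.sum_congr rfl fun (c : Fin n) _ => Finset.mul_sum _ _ _,
        Finset.sum_comm]
      exact Finset.sum_eq_zero fun t _ => key t
    linarith [main]
end

section
/- There exist two distinct 4 × 4 × 4 alternating sign hypermatrices A and B with L(A) = L(B); consequently 4 is the minimum dimension n for which two distinct n × n × n ASHMs can have the same corresponding ASHL. -/
open Finset

/-! ### Auxiliary definitions -/

def dec3 : Fin 3 → ℤ := ![-1, 0, 1]

/-- The four alternating lines of length 3. -/
def L3 : Fin 4 → Fin 3 → ℤ := ![![1,0,0], ![0,1,0], ![0,0,1], ![1,-1,1]]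

/-- The two alternating lines of length 2. -/
def L2 : Fin 2 → Fin 2 → ℤ := ![![1,0], ![0,1]]

/-- The seven 3×3 ASMs, coded as rows of `L3`-codes. -/
def R7 : Fin 7 → Fin 3 → Fin 4 :=
  ![![0,1,2], ![0,2,1], ![1,0,2], ![1,2,0], ![1,3,1], ![2,0,1], ![2,1,0]]

/-- The fourteen 3×3×3 ASHMs, coded by vertical-line `L3`-codes. -/
def G14 : Fin 14 → Fin 3 → Fin 3 → Fin 4 :=
  ![
    ![![0, 1, 2], ![1, 2, 0], ![2, 0, 1]],
    ![![0, 1, 2], ![1, 3, 1], ![2, 1, 0]],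
    ![![0, 1, 2], ![2, 0, 1], ![1, 2, 0]],
    ![![0, 2, 1], ![1, 0, 2], ![2, 1, 0]],
    ![![0, 2, 1], ![2, 1, 0], ![1, 0, 2]],
    ![![1, 0, 2], ![0, 2, 1], ![2, 1, 0]],
    ![![1, 0, 2], ![2, 1, 0], ![0, 2, 1]],
    ![![1, 2, 0], ![0, 1, 2], ![2, 0, 1]],
    ![![1, 2, 0], ![2, 0, 1], ![0, 1, 2]],
    ![![2, 0, 1], ![0, 1, 2], ![1, 2, 0]],
    ![![2, 0, 1], ![1, 2, 0], ![0, 1, 2]],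
    ![![2, 1, 0], ![0, 2, 1], ![1, 0, 2]],
    ![![2, 1, 0], ![1, 0, 2], ![0, 2, 1]],
    ![![2, 1, 0], ![1, 3, 1], ![0, 1, 2]]]

instance altLineDec {n : ℕ} (f : Fin n → ℤ) : Decidable (AltLine f) := by
  unfold AltLine; infer_instance

instance isASHMDec {n : ℕ} (A : Fin n → Fin n → Fin n → ℤ) : Decidable (IsASHM A) := by
  unfold IsASHM; infer_instance

lemma entries_mem {n : ℕ} {f : Fin n → ℤ} (hf : AltLine f) (i : Fin n) :
    f i = -1 ∨ f i = 0 ∨ f i = 1 := by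
  by_cases h0 : f i = 0
  · exact Or.inr (Or.inl h0)
  have hmem : f i ∈ nonzeroList f := by
    unfold nonzeroList
    rw [List.mem_filter]
    exact ⟨List.mem_map_of_mem (f := f) (List.mem_finRange i), by simpa using h0⟩
  obtain ⟨⟨idx, hlt⟩, hget⟩ := List.mem_iff_get.mp hmem
  have hv := hf.2.1 idx hlt
  rw [hget] at hv
  rcases Nat.even_or_odd idx with he | ho
  · right; right; rw [hv, he.neg_one_pow]
  · left; rw [hv, ho.neg_one_pow]

lemma altLine_encode {n : ℕ} {f : Fin n → ℤ} (hf : AltLine f) :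
    ∃ e : Fin n → Fin 3, f = fun i => dec3 (e i) := by
  refine ⟨fun i => if f i = -1 then 0 else if f i = 0 then 1 else 2, ?_⟩
  funext i
  rcases entries_mem hf i with h | h | h <;> simp [h, dec3]

lemma class1_aux : ∀ e : Fin 1 → Fin 3, AltLine (fun i => dec3 (e i)) →
    (fun i => dec3 (e i)) = (fun _ => (1 : ℤ)) := by decide

lemma class1 {f : Fin 1 → ℤ} (hf : AltLine f) : f = fun _ => (1 : ℤ) := by
  obtain ⟨e, he⟩ := altLine_encode hf
  rw [he]; exact class1_aux e (he ▸ hf)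

lemma class2_aux : ∀ e : Fin 2 → Fin 3, AltLine (fun i => dec3 (e i)) →
    ∃ c : Fin 2, (fun i => dec3 (e i)) = L2 c := by decide

lemma class2 {f : Fin 2 → ℤ} (hf : AltLine f) : ∃ c : Fin 2, f = L2 c := by
  obtain ⟨e, he⟩ := altLine_encode hf
  rw [he]; exact class2_aux e (he ▸ hf)

lemma class3_aux : ∀ e : Fin 3 → Fin 3, AltLine (fun i => dec3 (e i)) →
    ∃ c : Fin 4, (fun i => dec3 (e i)) = L3 c := by decide

lemma class3 {f : Fin 3 → ℤ} (hf : AltLine f) : ∃ c : Fin 4, f = L3 c := by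
  obtain ⟨e, he⟩ := altLine_encode hf
  rw [he]; exact class3_aux e (he ▸ hf)

lemma key2 : ∀ c c' : Fin 2,
    (∑ k : Fin 2, ((k : ℕ) + 1 : ℤ) * L2 c k) = (∑ k : Fin 2, ((k : ℕ) + 1 : ℤ) * L2 c' k) →
    c = c' := by decide

lemma rowclass : ∀ r : Fin 3 → Fin 4, (∀ k, AltLine (fun j => L3 (r j) k)) →
    ∃ m : Fin 7, r = R7 m := by decide

set_option maxRecDepth 10000 in
lemma step1 : ∀ m : Fin 3 → Fin 7,
    IsASHM (fun i j k => L3 (R7 (m i) j) k) →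
    ∃ t : Fin 14, (fun i => R7 (m i)) = G14 t := by decide

lemma step2 : ∀ t t' : Fin 14,
    ashl (fun i j k => L3 (G14 t i j) k) = ashl (fun i j k => L3 (G14 t' i j) k) →
    G14 t = G14 t' := by decide

/-- Coded form: decode a matrix of vertical-line codes to a hypermatrix. -/
lemma decode3 {A : Fin 3 → Fin 3 → Fin 3 → ℤ} (hA : IsASHM A) :
    ∃ t : Fin 14, A = fun i j k => L3 (G14 t i j) k := by
  choose g hg using fun i j => class3 (hA.2.2 i j)
  have hAeq : A = fun i j k => L3 (g i j) k := by
    funext i j k; exact congrFun (hg i j) k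
  choose m hm using fun i => rowclass (g i) (by
    intro k
    have := hA.2.1 i k
    have h2 : (fun j => A i j k) = fun j => L3 (g i j) k := by
      funext j; exact congrFun (hg i j) k
    rwa [h2] at this)
  have hgm : g = fun i => R7 (m i) := funext hm
  obtain ⟨t, ht⟩ := step1 m (by rw [hAeq, hgm] at hA; exact hA)
  exact ⟨t, by rw [hAeq, hgm, ht]⟩

/-- Witness `A` for the 4×4×4 example. -/
def Awit : Fin 4 → Fin 4 → Fin 4 → ℤ := fun i j k =>
  ![![![0,0,0,1],![0,0,1,0],![0,1,0,0],![1,0,0,0]],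
    ![![0,0,1,0],![0,1,-1,1],![1,-1,1,0],![0,1,0,0]],
    ![![0,1,0,0],![1,0,0,0],![0,0,0,1],![0,0,1,0]],
    ![![1,0,0,0],![0,0,1,0],![0,1,0,0],![0,0,0,1]]] k i j

/-- Witness `B` for the 4×4×4 example. -/
def Bwit : Fin 4 → Fin 4 → Fin 4 → ℤ := fun i j k =>
  ![![![0,0,0,1],![0,1,0,0],![0,0,1,0],![1,0,0,0]],
    ![![0,0,1,0],![0,0,0,1],![1,0,0,0],![0,1,0,0]],
    ![![0,1,0,0],![1,-1,1,0],![0,1,-1,1],![0,0,1,0]],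
    ![![1,0,0,0],![0,1,0,0],![0,0,1,0],![0,0,0,1]]] k i j

theorem min_dimension_for_shared_ashl :
    (∃ A B : Fin 4 → Fin 4 → Fin 4 → ℤ,
      IsASHM A ∧ IsASHM B ∧ A ≠ B ∧ ashl A = ashl B) ∧
    (∀ n : ℕ, n < 4 → ∀ A B : Fin n → Fin n → Fin n → ℤ,
      IsASHM A → IsASHM B → ashl A = ashl B → A = B) := by
  constructor
  · refine ⟨Awit, Bwit, ?_, ?_, ?_, ?_⟩
    · decide
    · decide
    · decide
    · decide
  · intro n hn A B hA hB hL
    interval_cases n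
    · funext i; exact i.elim0
    · -- n = 1
      funext i j k
      have h1 := congrFun (class1 (hA.2.2 i j)) k
      have h2 := congrFun (class1 (hB.2.2 i j)) k
      rw [h1, h2]
    · -- n = 2
      choose g hg using fun i j => class2 (hA.2.2 i j)
      choose g' hg' using fun i j => class2 (hB.2.2 i j)
      funext i j k
      have hsum : (∑ k : Fin 2, ((k : ℕ) + 1 : ℤ) * L2 (g i j) k)
          = ∑ k : Fin 2, ((k : ℕ) + 1 : ℤ) * L2 (g' i j) k := by
        have := congrFun (congrFun hL i) j
        unfold ashl at this
        calc (∑ k : Fin 2, ((k : ℕ) + 1 : ℤ) * L2 (g i j) k)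
            = ∑ k : Fin 2, ((k : ℕ) + 1 : ℤ) * A i j k := by
              refine Finset.sum_congr rfl fun k _ => ?_
              rw [congrFun (hg i j) k]
          _ = ∑ k : Fin 2, ((k : ℕ) + 1 : ℤ) * B i j k := this
          _ = ∑ k : Fin 2, ((k : ℕ) + 1 : ℤ) * L2 (g' i j) k := by
              refine Finset.sum_congr rfl fun k _ => ?_
              rw [congrFun (hg' i j) k]
      have := key2 _ _ hsum
      rw [congrFun (hg i j) k, congrFun (hg' i j) k, this]
    · -- n = 3
      obtain ⟨t, ht⟩ := decode3 hA
      obtain ⟨t', ht'⟩ := decode3 hB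
      rw [ht, ht'] at hL
      have := step2 t t' hL
      rw [ht, ht', this]
end
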